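/- Let σ be a density matrix and ρ a positive definite diagonal density matrix on ℂ^n, both with diag(σ) positive definite. Then D(σ||ρ) - D(diag(σ)||ρ) = D(σ||diag(σ)), a quantity independent of ρ; hence minimizing ρ ↦ D(σ||ρ) over diagonal density matrices is equivalent to minimizing ρ ↦ D(diag(σ)||ρ). -/

import Mathlib

open scoped ComplexOrder
open Matrix

/-- The diagonal part of a matrix in the standard basis. -/
def diagPart {n : ℕ} (B : Matrix (Fin n) (Fin n) ℂ) : Matrix (Fin n) (Fin n) ℂ :=
  Matrix.diagonal (fun j => B j j)

/-- Logarithm of a matrix via the spectral decomposition (0 for non-Hermitian input);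
    since `Real.log 0 = 0` this incorporates the convention `0 * ln 0 = 0`. -/
noncomputable def matLog {n : ℕ} (A : Matrix (Fin n) (Fin n) ℂ) : Matrix (Fin n) (Fin n) ℂ :=
  if h : A.IsHermitian then
    (h.eigenvectorUnitary : Matrix (Fin n) (Fin n) ℂ)
      * Matrix.diagonal (fun i => (Real.log (h.eigenvalues i) : ℂ))
      * star (h.eigenvectorUnitary : Matrix (Fin n) (Fin n) ℂ)
  else 0

/-- Quantum relative entropy `D(σ‖ρ) = Tr σ ln σ - Tr σ ln ρ`. -/
noncomputable def relEnt {n : ℕ} (σ ρ : Matrix (Fin n) (Fin n) ℂ) : ℝ :=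
  ((σ * matLog σ).trace - (σ * matLog ρ).trace).re

/-- Conjugation by a unitary matrix as an algebra homomorphism. -/
noncomputable def conjAlg {n : ℕ} (U : Matrix.unitaryGroup (Fin n) ℂ) :
    Matrix (Fin n) (Fin n) ℂ →ₐ[ℂ] Matrix (Fin n) (Fin n) ℂ where
  toFun M := (U : Matrix (Fin n) (Fin n) ℂ) * M * star (U : Matrix (Fin n) (Fin n) ℂ)
  map_one' := by
    simp [Matrix.mul_one, (Matrix.mem_unitaryGroup_iff).mp U.2]
  map_mul' M N := by
    have h : star (U : Matrix (Fin n) (Fin n) ℂ) * (U : Matrix (Fin n) (Fin n) ℂ) = 1 :=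
      (Matrix.mem_unitaryGroup_iff').mp U.2
    symm
    calc ((U : Matrix (Fin n) (Fin n) ℂ) * M * star (U : Matrix (Fin n) (Fin n) ℂ))
          * ((U : Matrix (Fin n) (Fin n) ℂ) * N * star (U : Matrix (Fin n) (Fin n) ℂ))
        = (U : Matrix (Fin n) (Fin n) ℂ) * (M * ((star (U : Matrix (Fin n) (Fin n) ℂ)
            * (U : Matrix (Fin n) (Fin n) ℂ)) * (N * star (U : Matrix (Fin n) (Fin n) ℂ)))) := by
          simp only [Matrix.mul_assoc]
      _ = (U : Matrix (Fin n) (Fin n) ℂ) * (M * N) * star (U : Matrix (Fin n) (Fin n) ℂ) := by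
          rw [h, one_mul]; simp only [Matrix.mul_assoc]
  map_zero' := by simp
  map_add' M N := by
    simp [Matrix.add_mul, Matrix.mul_add]
  commutes' r := by
    have h : (U : Matrix (Fin n) (Fin n) ℂ) * star (U : Matrix (Fin n) (Fin n) ℂ) = 1 :=
      (Matrix.mem_unitaryGroup_iff).mp U.2
    simp only [Algebra.algebraMap_eq_smul_one, Matrix.mul_smul, Matrix.mul_one,
      Matrix.smul_mul, h]

/-- `matLog` of a diagonal Hermitian matrix is diagonal. -/
lemma matLog_of_diagonal {n : ℕ} (d : Fin n → ℂ) (h : (Matrix.diagonal d).IsHermitian) :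
    ∃ e : Fin n → ℂ, matLog (Matrix.diagonal d) = Matrix.diagonal e := by
  classical
  set lam := h.eigenvalues with hlam
  set s : Finset ℂ := Finset.univ.image (fun i => ((lam i : ℝ) : ℂ)) with hs
  set r : ℂ → ℂ := fun z => (Real.log z.re : ℂ) with hr
  set q := Lagrange.interpolate s id r with hqdef
  have hq : ∀ i, Polynomial.eval ((lam i : ℝ) : ℂ) q = (Real.log (lam i) : ℂ) := by
    intro i
    have hmem : ((lam i : ℝ) : ℂ) ∈ s := Finset.mem_image.mpr ⟨i, Finset.mem_univ _, rfl⟩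
    have := Lagrange.eval_interpolate_at_node r (Set.injOn_id _) hmem
    simpa [hr, hqdef] using this
  -- aeval of a diagonal matrix is diagonal
  have haev : ∀ v : Fin n → ℂ, Polynomial.aeval (Matrix.diagonal v) q
      = Matrix.diagonal (fun i => Polynomial.eval (v i) q) := by
    intro v
    have h1 : Matrix.diagonal v = Matrix.diagonalAlgHom ℂ v := rfl
    rw [h1, Polynomial.aeval_algHom_apply]
    have h2 : ∀ w : Fin n → ℂ, Matrix.diagonalAlgHom ℂ w = Matrix.diagonal w := fun _ => rfl
    rw [h2]
    have h3 : (Polynomial.aeval v q : Fin n → ℂ) = fun i => Polynomial.eval (v i) q := by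
      funext i
      rw [Polynomial.aeval_fn_apply]
      rfl
    rw [h3]
  set U := h.eigenvectorUnitary with hU
  have hd : Matrix.diagonal d = conjAlg U (Matrix.diagonal (fun i => ((lam i : ℝ) : ℂ))) :=
    h.spectral_theorem
  have hconj : Polynomial.aeval (Matrix.diagonal d) q
      = conjAlg U (Polynomial.aeval (Matrix.diagonal (fun i => ((lam i : ℝ) : ℂ))) q) := by
    rw [hd, Polynomial.aeval_algHom_apply]
  refine ⟨fun j => Polynomial.eval (d j) q, ?_⟩
  have hlog : matLog (Matrix.diagonal d)
      = conjAlg U (Matrix.diagonal (fun i => Polynomial.eval ((lam i : ℝ) : ℂ) q)) := by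
    rw [matLog, dif_pos h]
    have hfun : Matrix.diagonal (fun i => ((Real.log (h.eigenvalues i)) : ℂ))
        = Matrix.diagonal (fun i => Polynomial.eval ((lam i : ℝ) : ℂ) q) := by
      have : (fun i => ((Real.log (h.eigenvalues i)) : ℂ))
          = (fun i => Polynomial.eval ((lam i : ℝ) : ℂ) q) := funext fun i => (hq i).symm
      rw [this]
    rw [hfun]
    rfl
  rw [hlog, ← haev, ← hconj, haev]

/-- Trace against a diagonal matrix only sees the diagonal part. -/
lemma trace_mul_diagonal {n : ℕ} (σ : Matrix (Fin n) (Fin n) ℂ) (e : Fin n → ℂ) :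
    (σ * Matrix.diagonal e).trace = (diagPart σ * Matrix.diagonal e).trace := by
  simp [Matrix.trace, Matrix.mul_apply, Matrix.diag, diagPart, Matrix.diagonal,
    Finset.sum_ite_eq', Finset.mem_univ]

theorem relEnt_diff_independent_of_rho {n : ℕ} (σ ρ : Matrix (Fin n) (Fin n) ℂ)
    (hσ : σ.PosSemidef) (hσ1 : σ.trace = 1)
    (hσc : (diagPart σ).PosDef)
    (hρ : ρ.PosDef) (hρ1 : ρ.trace = 1) (hρdiag : ∀ j k, j ≠ k → ρ j k = 0) :
    relEnt σ ρ - relEnt (diagPart σ) ρ = relEnt σ (diagPart σ) := by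
  have hρeq : ρ = Matrix.diagonal (fun j => ρ j j) := by
    ext j k
    by_cases hjk : j = k
    · subst hjk; simp [Matrix.diagonal]
    · simp [Matrix.diagonal, hjk, hρdiag j k hjk]
  -- matLog ρ is diagonal
  obtain ⟨e₁, he₁⟩ : ∃ e : Fin n → ℂ, matLog ρ = Matrix.diagonal e := by
    obtain ⟨e, he⟩ := matLog_of_diagonal (fun j => ρ j j) (hρeq ▸ hρ.isHermitian)
    exact ⟨e, by rw [hρeq]; exact he⟩
  -- matLog (diagPart σ) is diagonal
  obtain ⟨e₂, he₂⟩ : ∃ e : Fin n → ℂ, matLog (diagPart σ) = Matrix.diagonal e :=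
    matLog_of_diagonal (fun j => σ j j) hσc.isHermitian
  have key1 : (σ * matLog ρ).trace = (diagPart σ * matLog ρ).trace := by
    rw [he₁]; exact trace_mul_diagonal σ e₁
  have key2 : (σ * matLog (diagPart σ)).trace = (diagPart σ * matLog (diagPart σ)).trace := by
    rw [he₂]; exact trace_mul_diagonal σ e₂
  simp only [relEnt, key1, key2, Complex.sub_re]
  ring
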